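/- arXiv:0706.0362 — 2 statements merged into one kernel-verified Lean document; each statement's English description precedes it below -/
import Mathlib

section
/- Let Λ be a k-graph, G a group, and c : Λ → G a cocycle. For every infinite path x ∈ Λ^∞ and every g ∈ G there is a unique infinite path (x, g) ∈ (Λ ×_c G)^∞ of the skew product determined by (x, g)(0,m) = (x(0,m), c(x(0,m))^{-1} g) for all m ∈ ℕ^k. Its range is the vertex (x(0), g). -/
open CategoryTheory

attribute [local instance 2000] Preorder.smallCategory

/-- A `k`-graph: a small category `Λ` equipped with a degree functor `d : Λ → ℕᵏ`
satisfying the unique factorisation property.  Morphisms point from the range of a path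
to its source, so that `f ≫ g` corresponds to the composition `fg` of paths in the
`k`-graph literature (with `r (f ≫ g) = r f` and `s (f ≫ g) = s g`). -/
structure KGraph (k : ℕ) (Λ : Type) [SmallCategory Λ] : Type where
  deg : ∀ {a b : Λ}, (a ⟶ b) → Fin k → ℕ
  deg_id : ∀ a : Λ, deg (𝟙 a) = 0
  deg_comp : ∀ {a b c : Λ} (f : a ⟶ b) (g : b ⟶ c), deg (f ≫ g) = deg f + deg g
  factor : ∀ {a b : Λ} (f : a ⟶ b) (m n : Fin k → ℕ), deg f = m + n →
    ∃! t : Σ c : Λ, (a ⟶ c) × (c ⟶ b),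
      deg t.2.1 = m ∧ deg t.2.2 = n ∧ t.2.1 ≫ t.2.2 = f

/-- An infinite path in a `k`-graph: a degree-preserving functor `Ω_k → Λ`, where `Ω_k`
is realised as the preorder category on `ℕᵏ = Fin k → ℕ`; the morphism `(p, q)` (for
`p ≤ q`) is `homOfLE h : p ⟶ q` and must be sent to a path of degree `q - p`.
The range of the path is `P.obj 0`. -/
structure InfPath {k : ℕ} {Λ : Type} [SmallCategory Λ] (KG : KGraph k Λ) : Type where
  P : (Fin k → ℕ) ⥤ Λ
  deg_eq : ∀ {p q : Fin k → ℕ} (h : p ≤ q), KG.deg (P.map (homOfLE h)) = q - p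

/-- Translation by `n` on `ℕᵏ`, as a functor. -/
def transFunctor (k : ℕ) (n : Fin k → ℕ) : (Fin k → ℕ) ⥤ (Fin k → ℕ) where
  obj p := p + n
  map f := homOfLE (add_le_add (leOfHom f) (le_refl n))
  map_id _ := rfl
  map_comp _ _ := rfl

/-- The shift `σⁿ x` of an infinite path `x`, satisfying `σⁿ x (p, q) = x (p + n, q + n)`. -/
def InfPath.shift {k : ℕ} {Λ : Type} [SmallCategory Λ] {KG : KGraph k Λ}
    (x : InfPath KG) (n : Fin k → ℕ) : InfPath KG where
  P := transFunctor k n ⋙ x.P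
  deg_eq {p q} h := by
    have h1 : (transFunctor k n ⋙ x.P).map (homOfLE h)
        = x.P.map (homOfLE (add_le_add h (le_refl n))) := rfl
    rw [h1]
    refine (x.deg_eq (add_le_add h (le_refl n))).trans ?_
    funext i
    simp only [Pi.sub_apply, Pi.add_apply]
    omega

/-- A cocycle on a `k`-graph: a functor `c : Λ → G` into a group `G` (viewed as a category
with one object).  With our orientation of arrows, `c (f ≫ g) = c f * c g`. -/
structure Cocycle (Λ : Type) [SmallCategory Λ] (G : Type) [Group G] : Type where
  c : ∀ {a b : Λ}, (a ⟶ b) → G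
  map_id : ∀ a : Λ, c (𝟙 a) = 1
  map_comp : ∀ {a b d : Λ} (f : a ⟶ b) (g : b ⟶ d), c (f ≫ g) = c f * c g

/-- The skew product `Λ ×_c G`: vertices are pairs `(v, g)`, and `(λ, g)` is a path with
source `(s λ, g)` and range `(r λ, c(λ) g)`.  Here a morphism from `(a, h)` to `(b, g)` is
a path `f : a ⟶ b` with `c f * g = h`. -/
structure Skew {Λ : Type} [SmallCategory Λ] {G : Type} [Group G] (σ : Cocycle Λ G) : Type where
  base : Λ
  grp : G

instance Skew.instCategory {Λ : Type} [SmallCategory Λ] {G : Type} [Group G]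
    (σ : Cocycle Λ G) : SmallCategory (Skew σ) where
  Hom a b := {f : a.base ⟶ b.base // σ.c f * b.grp = a.grp}
  id a := ⟨𝟙 a.base, by rw [σ.map_id, one_mul]⟩
  comp f g := ⟨f.1 ≫ g.1, by rw [σ.map_comp, mul_assoc, g.2, f.2]⟩
  id_comp f := by apply Subtype.ext; exact Category.id_comp f.1
  comp_id f := by apply Subtype.ext; exact Category.comp_id f.1
  assoc f g h := by apply Subtype.ext; exact Category.assoc f.1 g.1 h.1

/-- The `k`-graph structure on the skew product `Λ ×_c G`. -/
def skewKGraph {k : ℕ} {Λ : Type} [SmallCategory Λ] (KG : KGraph k Λ) {G : Type} [Group G]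
    (σ : Cocycle Λ G) : KGraph k (Skew σ) where
  deg f := KG.deg f.1
  deg_id a := KG.deg_id a.base
  deg_comp f g := KG.deg_comp f.1 g.1
  factor := by
    rintro a b f m n hmn
    obtain ⟨⟨c0, g0, h0⟩, ⟨hgm, hhn, hgh⟩, huniq⟩ := KG.factor f.1 m n hmn
    refine ⟨⟨⟨c0, (σ.c g0)⁻¹ * a.grp⟩, ⟨g0, mul_inv_cancel_left _ _⟩, ⟨h0, ?_⟩⟩,
      ⟨hgm, hhn, Subtype.ext hgh⟩, ?_⟩
    · rw [← f.2, ← hgh, σ.map_comp, mul_assoc, inv_mul_cancel_left]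
    · rintro ⟨⟨c1, x1⟩, ⟨g1, hg1⟩, ⟨h1, hh1⟩⟩ ⟨hm1, hn1, hcomp1⟩
      have hbase : (⟨c0, g0, h0⟩ : Σ c : Λ, (a.base ⟶ c) × (c ⟶ b.base)) = ⟨c1, g1, h1⟩ :=
        (huniq ⟨c1, g1, h1⟩ ⟨hm1, hn1, congrArg Subtype.val hcomp1⟩).symm
      obtain ⟨h1', h2'⟩ := Sigma.mk.inj_iff.mp hbase
      subst h1'
      obtain ⟨h3', h4'⟩ := Prod.mk.inj (eq_of_heq h2')
      subst h3'
      subst h4'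
      have hx : x1 = (σ.c g0)⁻¹ * a.grp := by rw [← hg1, inv_mul_cancel_left]
      subst hx
      rfl

lemma kgraph_hom_eq {k : ℕ} {p q : Fin k → ℕ} (f g : p ⟶ q) : f = g :=
  Subsingleton.elim f g

lemma deg_eqToHom {k : ℕ} {Λ : Type} [SmallCategory Λ] (KG : KGraph k Λ) {a b : Λ}
    (h : a = b) : KG.deg (eqToHom h) = 0 := by
  subst h; simpa using KG.deg_id a

lemma conj_heq {Λ : Type} [SmallCategory Λ] {a b a' b' : Λ} (ha : a' = a) (hb : b = b')
    (f : a ⟶ b) (f' : a' ⟶ b') (h : HEq f f') : eqToHom ha ≫ f ≫ eqToHom hb = f' := by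
  subst ha; subst hb; simpa using eq_of_heq h

lemma heq_conj {Λ : Type} [SmallCategory Λ] {a b a' b' : Λ} (h1 : a' = a) (h2 : b = b')
    (f : a ⟶ b) : HEq (eqToHom h1 ≫ f ≫ eqToHom h2) f := by
  subst h1; subst h2; simp

lemma skew_hom_ext {Λ : Type} [SmallCategory Λ] {G : Type} [Group G] {σ : Cocycle Λ G}
    {a b a' b' : Skew σ} (ha : a = a') (hb : b = b') (f : a ⟶ b) (f' : a' ⟶ b')
    (h : HEq f.1 f'.1) : f = eqToHom ha ≫ f' ≫ eqToHom hb.symm := by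
  subst ha; subst hb
  simp only [eqToHom_refl, Category.id_comp, Category.comp_id]
  exact Subtype.ext (eq_of_heq h)

/-- The lift of an infinite path `x` to the skew product, with `(x,g)(0,m) =
`(x(0,m), c(x(0,m))⁻¹ g)`. -/
def skewLift {k : ℕ} {Λ : Type} [SmallCategory Λ] {KG : KGraph k Λ} {G : Type} [Group G]
    (σ : Cocycle Λ G) (x : InfPath KG) (g : G) : InfPath (skewKGraph KG σ) where
  P :=
    { obj := fun m => ⟨x.P.obj m, (σ.c (x.P.map (homOfLE (zero_le : (0 : Fin k → ℕ) ≤ m))))⁻¹ * g⟩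
      map := fun {p q} f => ⟨x.P.map (homOfLE (leOfHom f)), by
        show σ.c (x.P.map (homOfLE (leOfHom f))) *
            ((σ.c (x.P.map (homOfLE (zero_le : (0 : Fin k → ℕ) ≤ q))))⁻¹ * g)
          = (σ.c (x.P.map (homOfLE (zero_le : (0 : Fin k → ℕ) ≤ p))))⁻¹ * g
        have h : x.P.map (homOfLE (zero_le : (0 : Fin k → ℕ) ≤ q)) =
            x.P.map (homOfLE (zero_le : (0 : Fin k → ℕ) ≤ p)) ≫ x.P.map (homOfLE (leOfHom f)) := by
          rw [← x.P.map_comp]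
          exact congrArg x.P.map (kgraph_hom_eq _ _)
        rw [h, σ.map_comp]
        group⟩
      map_id := fun p => Subtype.ext (by
        show x.P.map (homOfLE (leOfHom (𝟙 p))) = 𝟙 (x.P.obj p)
        have h : homOfLE (leOfHom (𝟙 p)) = 𝟙 p := kgraph_hom_eq _ _
        rw [h, x.P.map_id])
      map_comp := fun {p q r} f h => Subtype.ext (by
        show x.P.map (homOfLE (leOfHom (f ≫ h)))
          = x.P.map (homOfLE (leOfHom f)) ≫ x.P.map (homOfLE (leOfHom h))
        have h' : homOfLE (leOfHom (f ≫ h)) = homOfLE (leOfHom f) ≫ homOfLE (leOfHom h) :=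
          kgraph_hom_eq _ _
        rw [h', x.P.map_comp]) }
  deg_eq {p q} h := x.deg_eq h

/-- Let `c` be a cocycle on a `k`-graph `Λ` with values in a group `G`.
For every infinite path `x ∈ Λ^∞` and every `g ∈ G` there is a unique infinite path
`(x, g)` of the skew product `Λ ×_c G` with `(x, g)(0, m) = (x(0, m), c(x(0, m))⁻¹ g)`
for all `m ∈ ℕᵏ`; its range is the vertex `(x(0), g)`. -/
theorem stmt10 {k : ℕ} {Λ : Type} [SmallCategory Λ] (KG : KGraph k Λ) {G : Type} [Group G]
    (σ : Cocycle Λ G) (x : InfPath KG) (g : G) :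
    ∃! y : InfPath (skewKGraph KG σ),
      (∀ m : Fin k → ℕ,
        y.P.obj m = ⟨x.P.obj m, (σ.c (x.P.map (homOfLE (zero_le : (0 : Fin k → ℕ) ≤ m))))⁻¹ * g⟩) ∧
      (∀ m : Fin k → ℕ,
        HEq (y.P.map (homOfLE (zero_le : (0 : Fin k → ℕ) ≤ m))).1 (x.P.map (homOfLE (zero_le : (0 : Fin k → ℕ) ≤ m)))) ∧
      y.P.obj 0 = ⟨x.P.obj 0, g⟩ := by
  refine ⟨skewLift σ x g, ⟨fun m => rfl, fun m => HEq.rfl, ?_⟩, ?_⟩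
  · show (⟨x.P.obj 0, (σ.c (x.P.map (homOfLE (zero_le : (0 : Fin k → ℕ) ≤ 0))))⁻¹ * g⟩ : Skew σ)
      = ⟨x.P.obj 0, g⟩
    have h : homOfLE (zero_le : (0 : Fin k → ℕ) ≤ 0) = 𝟙 (0 : Fin k → ℕ) := kgraph_hom_eq _ _
    rw [h, x.P.map_id, σ.map_id]
    simp
  · rintro y' ⟨hobj, hmap, h0⟩
    have key : ∀ (z w : InfPath (skewKGraph KG σ)), z.P = w.P → z = w := by
      rintro ⟨P1, h1⟩ ⟨P2, h2⟩ h
      cases h; rfl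
    apply key
    refine CategoryTheory.Functor.ext (fun m => hobj m) ?_
    intro p q f
    -- endpoint equalities in Λ
    have eb0 : (y'.P.obj 0).base = x.P.obj 0 := congrArg Skew.base h0
    have ebp : (y'.P.obj p).base = x.P.obj p := congrArg Skew.base (hobj p)
    have ebq : (y'.P.obj q).base = x.P.obj q := congrArg Skew.base (hobj q)
    have hpq : p ≤ q := leOfHom f
    have hf : f = homOfLE hpq := kgraph_hom_eq _ _
    -- composition in y'
    have hcomp : (y'.P.map (homOfLE (zero_le : (0 : Fin k → ℕ) ≤ q))).1
        = (y'.P.map (homOfLE (zero_le : (0 : Fin k → ℕ) ≤ p))).1 ≫ (y'.P.map f).1 := by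
      have h1 : homOfLE (zero_le : (0 : Fin k → ℕ) ≤ q) = homOfLE (zero_le : (0 : Fin k → ℕ) ≤ p) ≫ f := kgraph_hom_eq _ _
      rw [h1, y'.P.map_comp]; rfl
    -- degrees
    have hd0p : KG.deg (y'.P.map (homOfLE (zero_le : (0 : Fin k → ℕ) ≤ p))).1 = p - 0 := y'.deg_eq (zero_le : (0 : Fin k → ℕ) ≤ p)
    have hdf : KG.deg (y'.P.map f).1 = q - p := by
      rw [hf]; exact y'.deg_eq hpq
    have hdeg : KG.deg (x.P.map (homOfLE (zero_le : (0 : Fin k → ℕ) ≤ q))) = (p - 0) + (q - p) := by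
      rw [x.deg_eq]
      funext i
      have hh : p i ≤ q i := hpq i
      simp only [Pi.sub_apply, Pi.add_apply, Pi.zero_apply]
      omega
    obtain ⟨u, -, huniq⟩ := KG.factor (x.P.map (homOfLE (zero_le : (0 : Fin k → ℕ) ≤ q))) (p - 0) (q - p) hdeg
    -- triple from x
    have hT1 : (⟨x.P.obj p, x.P.map (homOfLE (zero_le : (0 : Fin k → ℕ) ≤ p)), x.P.map (homOfLE hpq)⟩
        : Σ c : Λ, (x.P.obj 0 ⟶ c) × (c ⟶ x.P.obj q)) = u := by
      refine huniq _ ⟨x.deg_eq (zero_le : (0 : Fin k → ℕ) ≤ p), x.deg_eq hpq, ?_⟩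
      rw [← x.P.map_comp]
      exact congrArg x.P.map (kgraph_hom_eq _ _)
    -- triple from y'
    have hT2 : (⟨x.P.obj p,
        eqToHom eb0.symm ≫ (y'.P.map (homOfLE (zero_le : (0 : Fin k → ℕ) ≤ p))).1 ≫ eqToHom ebp,
        eqToHom ebp.symm ≫ (y'.P.map f).1 ≫ eqToHom ebq⟩
        : Σ c : Λ, (x.P.obj 0 ⟶ c) × (c ⟶ x.P.obj q)) = u := by
      refine huniq _ ⟨?_, ?_, ?_⟩
      · rw [KG.deg_comp, KG.deg_comp, deg_eqToHom, deg_eqToHom, hd0p]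
        simp
      · rw [KG.deg_comp, KG.deg_comp, deg_eqToHom, deg_eqToHom, hdf]
        simp
      · show (eqToHom eb0.symm ≫ (y'.P.map (homOfLE (zero_le : (0 : Fin k → ℕ) ≤ p))).1 ≫ eqToHom ebp) ≫
          (eqToHom ebp.symm ≫ (y'.P.map f).1 ≫ eqToHom ebq)
          = x.P.map (homOfLE (zero_le : (0 : Fin k → ℕ) ≤ q))
        simp only [Category.assoc, eqToHom_trans_assoc, eqToHom_trans, eqToHom_refl,
          Category.id_comp]
        rw [← Category.assoc ((y'.P.map (homOfLE (zero_le : (0 : Fin k → ℕ) ≤ p))).1), ← hcomp]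
        exact conj_heq eb0.symm ebq _ _ (hmap q)
    have hT : (⟨x.P.obj p, x.P.map (homOfLE (zero_le : (0 : Fin k → ℕ) ≤ p)), x.P.map (homOfLE hpq)⟩
        : Σ c : Λ, (x.P.obj 0 ⟶ c) × (c ⟶ x.P.obj q))
        = ⟨x.P.obj p,
          eqToHom eb0.symm ≫ (y'.P.map (homOfLE (zero_le : (0 : Fin k → ℕ) ≤ p))).1 ≫ eqToHom ebp,
          eqToHom ebp.symm ≫ (y'.P.map f).1 ≫ eqToHom ebq⟩ := hT1.trans hT2.symm
    obtain ⟨-, h2⟩ := Sigma.mk.inj_iff.mp hT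
    have h3 := (Prod.mk.inj (eq_of_heq h2)).2
    -- conclude
    refine skew_hom_ext (hobj p) (hobj q) _ _ ?_
    show HEq (y'.P.map f).1 (x.P.map (homOfLE (leOfHom f)))
    rw [show homOfLE (leOfHom f) = homOfLE hpq from rfl, h3]
    exact (heq_conj ebp.symm ebq _).symm
end

section
/- Let p_n : Λ_{n+1} → Λ_n (n ≥ 1) be a sequence of row-finite coverings of k-graphs with no sources. Then varprojlim(Λ_i, p_i), with coordinatewise composition, identities, range and source, is a small category, and the map d̃((λ_i)_{i≥1}) := d(λ_1) is a functor to ℕ^k satisfying d̃((λ_i)) = d(λ_j) for all j and the factorisation property: for every λ = (λ_i) ∈ varprojlim(Λ_i, p_i) with d̃(λ) = m + n there exist unique elements λ(0,m) := (λ_i(0,m))_{i≥1} of degree m and λ(m,m+n) := (λ_i(m,m+n))_{i≥1} of degree n in varprojlim(Λ_i, p_i) such that λ = λ(0,m)·λ(m,m+n). -/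
open CategoryTheory

attribute [local instance 2000] Preorder.smallCategory

/-- A covering of `k`-graphs: a degree-preserving functor `p : Γ → Λ` which is surjective
on paths and restricts to bijections `vΓ → p(v)Λ` and `Γv → Λp(v)` for every vertex `v`. -/
structure IsCovering {k : ℕ} {Γ Λ : Type} [SmallCategory Γ] [SmallCategory Λ]
    (KGΓ : KGraph k Γ) (KGΛ : KGraph k Λ) (p : Γ ⥤ Λ) : Prop where
  deg_map : ∀ {a b : Γ} (f : a ⟶ b), KGΛ.deg (p.map f) = KGΓ.deg f
  surj : Function.Surjective
    (fun t : Σ (a b : Γ), a ⟶ b => (⟨p.obj t.1, p.obj t.2.1, p.map t.2.2⟩ : Σ (a b : Λ), a ⟶ b))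
  bij_out : ∀ v : Γ, Function.Bijective
    (fun t : Σ b : Γ, (v ⟶ b) => (⟨p.obj t.1, p.map t.2⟩ : Σ b' : Λ, (p.obj v ⟶ b')))
  bij_in : ∀ v : Γ, Function.Bijective
    (fun t : Σ a : Γ, (a ⟶ v) => (⟨p.obj t.1, p.map t.2⟩ : Σ a' : Λ, (a' ⟶ p.obj v)))

/-- An object of the projective limit `varprojlim (Λᵢ, pᵢ)`: a compatible sequence of
vertices. -/
structure PLimObj (Λ : ℕ → Type) [∀ n, SmallCategory (Λ n)]
    (p : ∀ n, Λ (n + 1) ⥤ Λ n) : Type where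
  v : ∀ n, Λ n
  compat : ∀ n, (p n).obj (v (n + 1)) = v n

/-- A morphism of the projective limit `varprojlim (Λᵢ, pᵢ)`: a compatible sequence of
paths `λᵢ ∈ Λᵢ` with `pᵢ(λ_{i+1}) = λᵢ`. -/
@[ext]
structure PLimHom {Λ : ℕ → Type} [∀ n, SmallCategory (Λ n)]
    {p : ∀ n, Λ (n + 1) ⥤ Λ n} (a b : PLimObj Λ p) : Type where
  f : ∀ n, a.v n ⟶ b.v n
  compat : ∀ n, f n =
    eqToHom (a.compat n).symm ≫ (p n).map (f (n + 1)) ≫ eqToHom (b.compat n)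

/-- The projective limit `varprojlim (Λᵢ, pᵢ)` is a small category with coordinatewise
composition, identities, range and source. -/
instance PLimObj.instCategory (Λ : ℕ → Type) [∀ n, SmallCategory (Λ n)]
    (p : ∀ n, Λ (n + 1) ⥤ Λ n) : SmallCategory (PLimObj Λ p) where
  Hom a b := PLimHom a b
  id a := ⟨fun n => 𝟙 (a.v n), by intro n; simp⟩
  comp f g := ⟨fun n => f.f n ≫ g.f n, by
    intro n
    try dsimp only
    rw [f.compat n, g.compat n]
    simp⟩
  id_comp f := by apply PLimHom.ext; funext n; exact Category.id_comp (f.f n)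
  comp_id f := by apply PLimHom.ext; funext n; exact Category.comp_id (f.f n)
  assoc f g h := by apply PLimHom.ext; funext n; exact Category.assoc (f.f n) (g.f n) (h.f n)

/-- The degree map on `varprojlim (Λᵢ, pᵢ)`: the degree of the first component. -/
def dtilde {k : ℕ} {Λ : ℕ → Type} [∀ n, SmallCategory (Λ n)]
    {p : ∀ n, Λ (n + 1) ⥤ Λ n} (KGs : ∀ n, KGraph k (Λ n))
    {a b : PLimObj Λ p} (f : a ⟶ b) : Fin k → ℕ :=
  (KGs 0).deg (f.f 0)

/-- Degree is invariant under conjugation by `eqToHom`. -/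
lemma KGraph.deg_eqToHom_conj {k : ℕ} {Λ : Type} [SmallCategory Λ] (KG : KGraph k Λ)
    {a a' b b' : Λ} (e : a = a') (e' : b = b') (g : a' ⟶ b) :
    KG.deg (eqToHom e ≫ g ≫ eqToHom e') = KG.deg g := by
  subst e; subst e'
  simp only [eqToHom_refl, Category.id_comp, Category.comp_id]

/-- Components of a triple equality. -/
lemma sigma_triple_components {Λ : Type} [SmallCategory Λ] {a b : Λ}
    {s s' : Σ c : Λ, (a ⟶ c) × (c ⟶ b)} (h : s = s') :
    ∃ e : s.1 = s'.1, s'.2.1 = s.2.1 ≫ eqToHom e ∧ s'.2.2 = eqToHom e.symm ≫ s.2.2 := by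
  subst h
  exact ⟨rfl, by simp, by simp⟩

lemma plim_eqToHom_f {Λ : ℕ → Type} [∀ n, SmallCategory (Λ n)]
    {p : ∀ n, Λ (n + 1) ⥤ Λ n} {a b : PLimObj Λ p} (e : a = b) (n : ℕ) :
    (eqToHom e).f n = eqToHom (congrArg (fun x => x.v n) e) := by
  subst e; rfl

lemma PLimObj.ext' {Λ : ℕ → Type} [∀ n, SmallCategory (Λ n)]
    {p : ∀ n, Λ (n + 1) ⥤ Λ n} {a b : PLimObj Λ p} (h : a.v = b.v) : a = b := by
  cases a; cases b; cases h; rfl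

lemma sigma_triple_ext {Λ : Type} [SmallCategory Λ] {a b : Λ}
    (s s' : Σ c : Λ, (a ⟶ c) × (c ⟶ b)) (e : s.1 = s'.1)
    (h1 : s'.2.1 = s.2.1 ≫ eqToHom e) (h2 : s'.2.2 = eqToHom e.symm ≫ s.2.2) : s = s' := by
  obtain ⟨c, g, h⟩ := s
  obtain ⟨c', g', h'⟩ := s'
  dsimp at e
  subst e
  simp only [eqToHom_refl, Category.comp_id, Category.id_comp] at h1 h2
  subst h1; subst h2; rfl

lemma KGraph.deg_eqToHom_comp {k : ℕ} {Λ : Type} [SmallCategory Λ] (KG : KGraph k Λ)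
    {a a' b : Λ} (e : a = a') (g : a' ⟶ b) : KG.deg (eqToHom e ≫ g) = KG.deg g := by
  subst e; simp only [eqToHom_refl, Category.id_comp]

lemma KGraph.deg_comp_eqToHom {k : ℕ} {Λ : Type} [SmallCategory Λ] (KG : KGraph k Λ)
    {a b b' : Λ} (e : b = b') (g : a ⟶ b) : KG.deg (g ≫ eqToHom e) = KG.deg g := by
  subst e; simp only [eqToHom_refl, Category.comp_id]

/-- The degrees of the components of a morphism in the projective limit are all equal. -/
lemma deg_step {k : ℕ} {Λ : ℕ → Type} [∀ n, SmallCategory (Λ n)]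
    {p : ∀ n, Λ (n + 1) ⥤ Λ n} (KGs : ∀ n, KGraph k (Λ n))
    (hcov : ∀ n, IsCovering (KGs (n + 1)) (KGs n) (p n))
    {a b : PLimObj Λ p} (f : a ⟶ b) (n : ℕ) :
    (KGs n).deg (f.f n) = (KGs (n + 1)).deg (f.f (n + 1)) := by
  rw [f.compat n, (KGs n).deg_eqToHom_conj, (hcov n).deg_map]

lemma deg_all {k : ℕ} {Λ : ℕ → Type} [∀ n, SmallCategory (Λ n)]
    {p : ∀ n, Λ (n + 1) ⥤ Λ n} (KGs : ∀ n, KGraph k (Λ n))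
    (hcov : ∀ n, IsCovering (KGs (n + 1)) (KGs n) (p n))
    {a b : PLimObj Λ p} (f : a ⟶ b) (j : ℕ) :
    dtilde KGs f = (KGs j).deg (f.f j) := by
  induction j with
  | zero => rfl
  | succ j ih => rw [ih, deg_step KGs hcov f j]


/-- Let `pₙ : Λ_{n+1} → Λₙ` be a sequence of row-finite coverings of
`k`-graphs with no sources.  Then `varprojlim (Λᵢ, pᵢ)` with coordinatewise structure maps
is a small category (this is the `PLimObj.instCategory` instance above), and
`d̃((λᵢ)) := d(λ₁)` defines a functor to `ℕᵏ` which agrees with `d(λⱼ)` for every `j` and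
satisfies the factorisation property, with the factorisations computed coordinatewise. -/
theorem stmt15 {k : ℕ} (Λ : ℕ → Type) [∀ n, SmallCategory (Λ n)]
    (p : ∀ n, Λ (n + 1) ⥤ Λ n) (KGs : ∀ n, KGraph k (Λ n))
    (hcov : ∀ n, IsCovering (KGs (n + 1)) (KGs n) (p n))
    (hfib : ∀ (n : ℕ) (v : Λ n), Finite {w : Λ (n + 1) // (p n).obj w = v})
    (hrow : ∀ (n : ℕ) (v : Λ n) (d : Fin k → ℕ),
      Finite ((b : Λ n) × {f : v ⟶ b // (KGs n).deg f = d}))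
    (hns : ∀ (n : ℕ) (v : Λ n) (d : Fin k → ℕ),
      ∃ (b : Λ n) (f : v ⟶ b), (KGs n).deg f = d) :
    (∀ a : PLimObj Λ p, dtilde KGs (𝟙 a) = 0) ∧
    (∀ (a b c : PLimObj Λ p) (f : a ⟶ b) (g : b ⟶ c),
      dtilde KGs (f ≫ g) = dtilde KGs f + dtilde KGs g) ∧
    (∀ (a b : PLimObj Λ p) (f : a ⟶ b) (j : ℕ), dtilde KGs f = (KGs j).deg (f.f j)) ∧
    (∀ (a b : PLimObj Λ p) (f : a ⟶ b) (m n : Fin k → ℕ), dtilde KGs f = m + n →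
      ∃! t : Σ c : PLimObj Λ p, (a ⟶ c) × (c ⟶ b),
        dtilde KGs t.2.1 = m ∧ dtilde KGs t.2.2 = n ∧ t.2.1 ≫ t.2.2 = f ∧
        ∀ i : ℕ, (KGs i).deg (t.2.1.f i) = m ∧ (KGs i).deg (t.2.2.f i) = n ∧
          t.2.1.f i ≫ t.2.2.f i = f.f i) := by
  refine ⟨fun a => (KGs 0).deg_id (a.v 0),
    fun a b c f g => (KGs 0).deg_comp (f.f 0) (g.f 0),
    fun a b f j => deg_all KGs hcov f j, ?_⟩
  intro a b f m n hmn
  have hdeg : ∀ i, (KGs i).deg (f.f i) = m + n := fun i => by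
    rw [← deg_all KGs hcov f i, hmn]
  let T : ∀ i, Σ c : Λ i, (a.v i ⟶ c) × (c ⟶ b.v i) :=
    fun i => ((KGs i).factor (f.f i) m n (hdeg i)).choose
  have hT : ∀ i, (KGs i).deg (T i).2.1 = m ∧ (KGs i).deg (T i).2.2 = n ∧
      (T i).2.1 ≫ (T i).2.2 = f.f i :=
    fun i => ((KGs i).factor (f.f i) m n (hdeg i)).choose_spec.1
  have hTu : ∀ (i) (y : Σ c : Λ i, (a.v i ⟶ c) × (c ⟶ b.v i)),
      ((KGs i).deg y.2.1 = m ∧ (KGs i).deg y.2.2 = n ∧ y.2.1 ≫ y.2.2 = f.f i) → y = T i :=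
    fun i => ((KGs i).factor (f.f i) m n (hdeg i)).choose_spec.2
  have hpush : ∀ i, (⟨(p i).obj (T (i + 1)).1,
      eqToHom (a.compat i).symm ≫ (p i).map (T (i + 1)).2.1,
      (p i).map (T (i + 1)).2.2 ≫ eqToHom (b.compat i)⟩ :
      Σ c : Λ i, (a.v i ⟶ c) × (c ⟶ b.v i)) = T i := by
    intro i
    apply hTu
    refine ⟨?_, ?_, ?_⟩
    · rw [(KGs i).deg_eqToHom_comp, (hcov i).deg_map]
      exact (hT (i + 1)).1
    · rw [(KGs i).deg_comp_eqToHom, (hcov i).deg_map]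
      exact (hT (i + 1)).2.1
    · show (eqToHom _ ≫ (p i).map _) ≫ ((p i).map _ ≫ eqToHom _) = f.f i
      simp only [Category.assoc]
      rw [← Functor.map_comp_assoc, (hT (i + 1)).2.2]
      exact (f.compat i).symm
  have hcompat : ∀ i, (p i).obj ((T (i + 1)).1) = (T i).1 :=
    fun i => congrArg Sigma.fst (hpush i)
  have hgcompat : ∀ i, (T i).2.1 =
      eqToHom (a.compat i).symm ≫ (p i).map ((T (i + 1)).2.1) ≫ eqToHom (hcompat i) := by
    intro i
    obtain ⟨e, hg, -⟩ := sigma_triple_components (hpush i)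
    rw [hg]
    simp only [Category.assoc]
  have hhcompat : ∀ i, (T i).2.2 =
      eqToHom (hcompat i).symm ≫ (p i).map ((T (i + 1)).2.2) ≫ eqToHom (b.compat i) := by
    intro i
    obtain ⟨e, -, hh⟩ := sigma_triple_components (hpush i)
    rw [hh]
  let C : PLimObj Λ p := ⟨fun i => (T i).1, hcompat⟩
  let G : a ⟶ C := PLimHom.mk (fun i => (T i).2.1) hgcompat
  let H : C ⟶ b := PLimHom.mk (fun i => (T i).2.2) hhcompat
  refine ⟨⟨C, G, H⟩, ⟨(hT 0).1, (hT 0).2.1, ?_, fun i => ⟨(hT i).1, (hT i).2.1, (hT i).2.2⟩⟩, ?_⟩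
  · apply PLimHom.ext
    funext i
    exact (hT i).2.2
  · rintro ⟨c', g', h'⟩ ⟨-, -, -, hy4⟩
    have key : ∀ i, (⟨c'.v i, g'.f i, h'.f i⟩ :
        Σ c : Λ i, (a.v i ⟶ c) × (c ⟶ b.v i)) = T i :=
      fun i => hTu i _ ⟨(hy4 i).1, (hy4 i).2.1, (hy4 i).2.2⟩
    have eobj : c' = C := PLimObj.ext' (funext fun i => congrArg Sigma.fst (key i))
    refine sigma_triple_ext _ _ eobj ?_ ?_
    · apply PLimHom.ext
      funext i
      obtain ⟨e, hg, -⟩ := sigma_triple_components (key i)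
      show (T i).2.1 = g'.f i ≫ (eqToHom eobj).f i
      rw [plim_eqToHom_f]
      exact hg
    · apply PLimHom.ext
      funext i
      obtain ⟨e, -, hh⟩ := sigma_triple_components (key i)
      show (T i).2.2 = (eqToHom eobj.symm).f i ≫ h'.f i
      rw [plim_eqToHom_f]
      exact hh
end
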